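/- arXiv:1901.03725 — 2 statements merged into one kernel-verified Lean document; each statement's English description precedes it below -/
import Mathlib

section
/- Let L_1, L_2, L_3 ⊆ ℂ^4 be 2-dimensional linear subspaces (lines in P^3) which are pairwise disjoint, i.e. L_i ∩ L_j = {0} for i ≠ j. Then the ℂ-vector space of homogeneous polynomials of degree 2 in ℂ[x_0,x_1,x_2,x_3] vanishing identically on L_1, L_2 and L_3 has dimension exactly 1; that is, there is a unique quadric surface through three pairwise skew lines. -/
open MvPolynomial

noncomputable section

abbrev C4 : Type := Fin 4 → ℂ
abbrev R3 : Type := MvPolynomial (Fin 4) ℂ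

/-- The homogeneous ideal of the line in `P^3` corresponding to a linear subspace
`L ⊆ ℂ^4`: all polynomials vanishing identically on `L`. -/
def lineIdeal (L : Submodule ℂ C4) : Ideal R3 where
  carrier := {F | ∀ v ∈ L, eval v F = 0}
  add_mem' := by
    intro a b ha hb v hv
    simp [ha v hv, hb v hv]
  zero_mem' := by
    intro v hv
    simp
  smul_mem' := by
    intro c F hF v hv
    simp [smul_eq_mul, hF v hv]

def pw (i j : Fin 4) : Fin 4 →₀ ℕ := Finsupp.single i 1 + Finsupp.single j 1

lemma pw_eq_iff {i j i' j' : Fin 4} :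
    pw i j = pw i' j' ↔ (i = i' ∧ j = j') ∨ (i = j' ∧ j = i') := by
  simpa [pw] using Finsupp.single_add_single_eq_single_add_single
    (M := ℕ) (u := 1) (v := 1) one_ne_zero one_ne_zero

lemma pwval (a b k : Fin 4) :
    pw a b k = (if a = k then 1 else 0) + (if b = k then 1 else 0) := by
  simp [pw, Finsupp.single_apply]

lemma degree_eq_sum (d : Fin 4 →₀ ℕ) : d.degree = d 0 + d 1 + d 2 + d 3 := by
  rw [Finsupp.degree]
  show ∑ i ∈ d.support, d i = _
  rw [Finset.sum_subset (Finset.subset_univ _)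
    (fun x _ hx => Finsupp.notMem_support_iff.mp hx)]
  simp [Fin.sum_univ_four]

lemma pw_degree (i j : Fin 4) : (pw i j).degree = 2 := by
  rw [degree_eq_sum]
  fin_cases i <;> fin_cases j <;> simp [pwval]

lemma monomial_pw (i j : Fin 4) (c : ℂ) :
    (monomial (pw i j) c : R3) = C c * X i * X j := by
  have h1 : (X i : R3) = monomial (Finsupp.single i 1) 1 := rfl
  have h2 : (X j : R3) = monomial (Finsupp.single j 1) 1 := rfl
  rw [h1, h2, C_apply, monomial_mul, monomial_mul, pw]
  simp

lemma exists_pw (d : Fin 4 →₀ ℕ) (hd : d.degree = 2) : ∃ a b : Fin 4, d = pw a b := by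
  have hsum : d 0 + d 1 + d 2 + d 3 = 2 := by rw [← degree_eq_sum]; exact hd
  by_cases h0 : d 0 = 0 <;> by_cases h1 : d 1 = 0 <;>
    by_cases h2 : d 2 = 0 <;> by_cases h3 : d 3 = 0
  · exact absurd hsum (by omega)
  · exact ⟨3, 3, Finsupp.ext (fun k => by
      fin_cases k <;> rw [pwval] <;> simp +arith +decide <;> omega)⟩
  · exact ⟨2, 2, Finsupp.ext (fun k => by
      fin_cases k <;> rw [pwval] <;> simp +arith +decide <;> omega)⟩
  · exact ⟨2, 3, Finsupp.ext (fun k => by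
      fin_cases k <;> rw [pwval] <;> simp +arith +decide <;> omega)⟩
  · exact ⟨1, 1, Finsupp.ext (fun k => by
      fin_cases k <;> rw [pwval] <;> simp +arith +decide <;> omega)⟩
  · exact ⟨1, 3, Finsupp.ext (fun k => by
      fin_cases k <;> rw [pwval] <;> simp +arith +decide <;> omega)⟩
  · exact ⟨1, 2, Finsupp.ext (fun k => by
      fin_cases k <;> rw [pwval] <;> simp +arith +decide <;> omega)⟩
  · exact absurd hsum (by omega)
  · exact ⟨0, 0, Finsupp.ext (fun k => by
      fin_cases k <;> rw [pwval] <;> simp +arith +decide <;> omega)⟩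
  · exact ⟨0, 3, Finsupp.ext (fun k => by
      fin_cases k <;> rw [pwval] <;> simp +arith +decide <;> omega)⟩
  · exact ⟨0, 2, Finsupp.ext (fun k => by
      fin_cases k <;> rw [pwval] <;> simp +arith +decide <;> omega)⟩
  · exact absurd hsum (by omega)
  · exact ⟨0, 1, Finsupp.ext (fun k => by
      fin_cases k <;> rw [pwval] <;> simp +arith +decide <;> omega)⟩
  · exact absurd hsum (by omega)
  · exact absurd hsum (by omega)
  · exact absurd hsum (by omega)

set_option maxHeartbeats 1000000 in
lemma homog2_decomp (q : R3) (hq : q.IsHomogeneous 2) :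
    q = monomial (pw 0 0) (coeff (pw 0 0) q) + monomial (pw 0 1) (coeff (pw 0 1) q)
      + monomial (pw 0 2) (coeff (pw 0 2) q) + monomial (pw 0 3) (coeff (pw 0 3) q)
      + monomial (pw 1 1) (coeff (pw 1 1) q) + monomial (pw 1 2) (coeff (pw 1 2) q)
      + monomial (pw 1 3) (coeff (pw 1 3) q) + monomial (pw 2 2) (coeff (pw 2 2) q)
      + monomial (pw 2 3) (coeff (pw 2 3) q) + monomial (pw 3 3) (coeff (pw 3 3) q) := by
  apply MvPolynomial.ext
  intro d
  simp only [coeff_add, coeff_monomial]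
  by_cases hd : d.degree = 2
  · obtain ⟨a, b, rfl⟩ := exists_pw d hd
    fin_cases a <;> fin_cases b <;>
      norm_num [pw_eq_iff, Fin.ext_iff, show ((3:Fin 4):ℕ) = 3 from rfl,
        show ((2:Fin 4):ℕ) = 2 from rfl, show ((1:Fin 4):ℕ) = 1 from rfl,
        show ((0:Fin 4):ℕ) = 0 from rfl] <;>
      first
        | rfl
        | exact congrArg (fun z => coeff z q) (add_comm _ _)
  · have hz : coeff d q = 0 := hq.coeff_eq_zero hd
    have hne : ∀ (a b : Fin 4), ¬ (pw a b = d) := by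
      intro a b hab; exact hd (hab ▸ pw_degree a b)
    simp [hne, hz]

lemma mem_lineIdeal {L : Submodule ℂ C4} {F : R3} :
    F ∈ lineIdeal L ↔ ∀ v ∈ L, eval v F = 0 := Iff.rfl

def sv (i : Fin 4) : C4 := Pi.single i 1

def q0 : R3 := X 0 * X 3 - X 1 * X 2

def Mline : Fin 3 → Submodule ℂ C4 :=
  ![Submodule.span ℂ {sv 0, sv 1}, Submodule.span ℂ {sv 2, sv 3},
    Submodule.span ℂ {sv 0 + sv 2, sv 1 + sv 3}]

lemma pw12_ne_pw03 : pw 1 2 ≠ pw 0 3 := by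
  rw [Ne, pw_eq_iff]
  norm_num [Fin.ext_iff, show ((3:Fin 4):ℕ) = 3 from rfl,
    show ((2:Fin 4):ℕ) = 2 from rfl, show ((1:Fin 4):ℕ) = 1 from rfl,
    show ((0:Fin 4):ℕ) = 0 from rfl]

lemma q0_ne : q0 ≠ 0 := by
  intro h
  have : coeff (pw 0 3) q0 = 1 := by
    rw [q0, show (X 0 * X 3 : R3) = monomial (pw 0 3) 1 by rw [monomial_pw]; simp,
      show (X 1 * X 2 : R3) = monomial (pw 1 2) 1 by rw [monomial_pw]; simp]
    simp [coeff_monomial, pw12_ne_pw03]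
  rw [h] at this
  simp at this

lemma eval_q0 (v : C4) : eval v q0 = v 0 * v 3 - v 1 * v 2 := by simp [q0]

lemma q0_homog : q0 ∈ homogeneousSubmodule (Fin 4) ℂ 2 := by
  rw [mem_homogeneousSubmodule]
  exact ((isHomogeneous_X ℂ 0).mul (isHomogeneous_X ℂ 3)).sub
    ((isHomogeneous_X ℂ 1).mul (isHomogeneous_X ℂ 2))

lemma heval (q : R3) (hq : q.IsHomogeneous 2) (v : C4) :
    eval v q = coeff (pw 0 0) q * (v 0 * v 0) + coeff (pw 0 1) q * (v 0 * v 1)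
      + coeff (pw 0 2) q * (v 0 * v 2) + coeff (pw 0 3) q * (v 0 * v 3)
      + coeff (pw 1 1) q * (v 1 * v 1) + coeff (pw 1 2) q * (v 1 * v 2)
      + coeff (pw 1 3) q * (v 1 * v 3) + coeff (pw 2 2) q * (v 2 * v 2)
      + coeff (pw 2 3) q * (v 2 * v 3) + coeff (pw 3 3) q * (v 3 * v 3) := by
  conv_lhs => rw [homog2_decomp q hq]
  simp only [map_add, monomial_pw, map_mul, eval_C, eval_X]
  ring

lemma hsv (i j : Fin 4) : sv i j = if j = i then 1 else 0 := Pi.single_apply i 1 j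

set_option maxHeartbeats 1000000 in
lemma concrete_eq :
    (homogeneousSubmodule (Fin 4) ℂ 2 ⊓
      ⨅ i : Fin 3, Submodule.restrictScalars ℂ (lineIdeal (Mline i)))
      = Submodule.span ℂ {q0} := by
  have hM0 : Mline 0 = Submodule.span ℂ {sv 0, sv 1} := rfl
  have hM1 : Mline 1 = Submodule.span ℂ {sv 2, sv 3} := rfl
  have hM2 : Mline 2 = Submodule.span ℂ {sv 0 + sv 2, sv 1 + sv 3} := rfl
  apply le_antisymm
  · intro q hq
    rw [Submodule.mem_inf, Submodule.mem_iInf] at hq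
    obtain ⟨hq2', hlin⟩ := hq
    rw [mem_homogeneousSubmodule] at hq2'
    have hid : ∀ i : Fin 3, ∀ v ∈ Mline i, eval v q = 0 := fun i => hlin i
    have mem00 : sv 0 ∈ Mline 0 := hM0 ▸ Submodule.subset_span (by simp)
    have mem01 : sv 1 ∈ Mline 0 := hM0 ▸ Submodule.subset_span (by simp)
    have mem02 : sv 0 + sv 1 ∈ Mline 0 :=
      Submodule.add_mem _ mem00 mem01
    have mem10 : sv 2 ∈ Mline 1 := hM1 ▸ Submodule.subset_span (by simp)
    have mem11 : sv 3 ∈ Mline 1 := hM1 ▸ Submodule.subset_span (by simp)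
    have mem12 : sv 2 + sv 3 ∈ Mline 1 := Submodule.add_mem _ mem10 mem11
    have mem20 : sv 0 + sv 2 ∈ Mline 2 := hM2 ▸ Submodule.subset_span (by simp)
    have mem21 : sv 1 + sv 3 ∈ Mline 2 := hM2 ▸ Submodule.subset_span (by simp)
    have mem22 : (sv 0 + sv 2) + (sv 1 + sv 3) ∈ Mline 2 :=
      Submodule.add_mem _ mem20 mem21
    have E1 : eval (sv 0) q = 0 := hid 0 _ mem00
    have E2 : eval (sv 1) q = 0 := hid 0 _ mem01
    have E3 : eval (sv 0 + sv 1) q = 0 := hid 0 _ mem02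
    have E4 : eval (sv 2) q = 0 := hid 1 _ mem10
    have E5 : eval (sv 3) q = 0 := hid 1 _ mem11
    have E6 : eval (sv 2 + sv 3) q = 0 := hid 1 _ mem12
    have E7 : eval (sv 0 + sv 2) q = 0 := hid 2 _ mem20
    have E8 : eval (sv 1 + sv 3) q = 0 := hid 2 _ mem21
    have E9 : eval ((sv 0 + sv 2) + (sv 1 + sv 3)) q = 0 := hid 2 _ mem22
    rw [heval q hq2'] at E1 E2 E3 E4 E5 E6 E7 E8 E9
    simp only [Pi.add_apply, hsv] at E1 E2 E3 E4 E5 E6 E7 E8 E9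
    norm_num [Fin.ext_iff, show ((3:Fin 4):ℕ) = 3 from rfl, show ((2:Fin 4):ℕ) = 2 from rfl,
      show ((1:Fin 4):ℕ) = 1 from rfl, show ((0:Fin 4):ℕ) = 0 from rfl]
      at E1 E2 E3 E4 E5 E6 E7 E8 E9
    have h00 : coeff (pw 0 0) q = 0 := by linear_combination E1
    have h11 : coeff (pw 1 1) q = 0 := by linear_combination E2
    have h01 : coeff (pw 0 1) q = 0 := by linear_combination E3 - E1 - E2
    have h22 : coeff (pw 2 2) q = 0 := by linear_combination E4
    have h33 : coeff (pw 3 3) q = 0 := by linear_combination E5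
    have h23 : coeff (pw 2 3) q = 0 := by linear_combination E6 - E4 - E5
    have h02 : coeff (pw 0 2) q = 0 := by linear_combination E7 - E1 - E4
    have h13 : coeff (pw 1 3) q = 0 := by linear_combination E8 - E2 - E5
    have h12 : coeff (pw 1 2) q = -coeff (pw 0 3) q := by
      linear_combination E9 - E1 - E2 - E3 - E4 - E5 - E6 - E7 - E8 + 2*E1 + 2*E2 + 2*E4 + 2*E5
    refine Submodule.mem_span_singleton.mpr ⟨coeff (pw 0 3) q, ?_⟩
    conv_rhs => rw [homog2_decomp q hq2']
    rw [h00, h01, h02, h11, h12, h13, h22, h23, h33]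
    simp only [monomial_zero, zero_add, add_zero, monomial_pw, q0]
    rw [smul_sub]
    simp only [smul_eq_C_mul, map_neg]
    ring
  · rw [Submodule.span_le, Set.singleton_subset_iff]
    refine Submodule.mem_inf.mpr ⟨q0_homog, Submodule.mem_iInf _ |>.mpr fun i => ?_⟩
    refine Submodule.restrictScalars_mem _ _ _ |>.mpr (mem_lineIdeal.mpr ?_)
    fin_cases i
    · intro v hv
      replace hv : v ∈ Submodule.span ℂ {sv 0, sv 1} := hv
      obtain ⟨a, b, rfl⟩ := Submodule.mem_span_pair.mp hv
      rw [eval_q0]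
      simp only [Pi.add_apply, Pi.smul_apply, hsv]
      norm_num [Fin.ext_iff, show ((3:Fin 4):ℕ) = 3 from rfl, show ((2:Fin 4):ℕ) = 2 from rfl,
        show ((1:Fin 4):ℕ) = 1 from rfl, show ((0:Fin 4):ℕ) = 0 from rfl]
      try ring
    · intro v hv
      replace hv : v ∈ Submodule.span ℂ {sv 2, sv 3} := hv
      obtain ⟨a, b, rfl⟩ := Submodule.mem_span_pair.mp hv
      rw [eval_q0]
      simp only [Pi.add_apply, Pi.smul_apply, hsv]
      norm_num [Fin.ext_iff, show ((3:Fin 4):ℕ) = 3 from rfl, show ((2:Fin 4):ℕ) = 2 from rfl,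
        show ((1:Fin 4):ℕ) = 1 from rfl, show ((0:Fin 4):ℕ) = 0 from rfl]
      try ring
    · intro v hv
      replace hv : v ∈ Submodule.span ℂ {sv 0 + sv 2, sv 1 + sv 3} := hv
      obtain ⟨a, b, rfl⟩ := Submodule.mem_span_pair.mp hv
      rw [eval_q0]
      simp only [Pi.add_apply, Pi.smul_apply, hsv]
      norm_num [Fin.ext_iff, show ((3:Fin 4):ℕ) = 3 from rfl, show ((2:Fin 4):ℕ) = 2 from rfl,
        show ((1:Fin 4):ℕ) = 1 from rfl, show ((0:Fin 4):ℕ) = 0 from rfl]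
      try ring

lemma concrete_finrank :
    Module.finrank ℂ
      ↥(homogeneousSubmodule (Fin 4) ℂ 2 ⊓
        ⨅ i : Fin 3, Submodule.restrictScalars ℂ (lineIdeal (Mline i))) = 1 := by
  rw [concrete_eq]
  exact finrank_span_singleton q0_ne

def subst (g : C4 →ₗ[ℂ] C4) : R3 →ₐ[ℂ] R3 :=
  aeval (fun i => ∑ j, C (g (Pi.single j 1) i) * X j)

lemma eval_subst (g : C4 →ₗ[ℂ] C4) (F : R3) (v : C4) :
    eval v (subst g F) = eval (g v) F := by
  have h1 := DFunLike.congr_fun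
    (comp_aeval (f := fun i => ∑ j, C (g (Pi.single j 1) i) * X j)
      (φ := (aeval v : R3 →ₐ[ℂ] ℂ))) F
  simp only [AlgHom.coe_comp, Function.comp_apply] at h1
  have e1 : ∀ (q : R3), (aeval v : R3 →ₐ[ℂ] ℂ) q = eval v q := fun q => by
    rw [← coe_aeval_eq_eval]; rfl
  have e2 : ∀ (q : R3), (aeval (g v) : R3 →ₐ[ℂ] ℂ) q = eval (g v) q := fun q => by
    rw [← coe_aeval_eq_eval]; rfl
  have hfun : (fun i => (aeval v : R3 →ₐ[ℂ] ℂ) (∑ j, C (g (Pi.single j 1) i) * X j))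
      = g v := by
    funext i
    have hv : v = ∑ j, Pi.single j (v j) := (Finset.univ_sum_single v).symm
    have hsingle : ∀ j : Fin 4, Pi.single j (v j) = v j • (Pi.single j 1 : C4) := by
      intro j; funext k; by_cases h : k = j <;> simp [Pi.single_apply, h]
    conv_rhs => rw [hv]
    simp only [map_sum, hsingle, map_smul]
    simp [Finset.sum_apply, mul_comm]
  rw [subst, ← e1, ← e2, h1, hfun]

lemma subst_homog (g : C4 →ₗ[ℂ] C4) {q : R3} (hq : q.IsHomogeneous 2) :
    (subst g q).IsHomogeneous 2 := by
  have h1 : ∀ i : Fin 4, (∑ j, C (g (Pi.single j 1) i) * X j : R3).IsHomogeneous 1 := by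
    intro i
    exact IsHomogeneous.sum _ _ _ fun j _ => (isHomogeneous_X ℂ j).C_mul _
  simpa [subst] using hq.aeval _ h1

lemma subst_subst (G : C4 ≃ₗ[ℂ] C4) (q : R3) :
    subst G.toLinearMap (subst G.symm.toLinearMap q) = q := by
  apply MvPolynomial.funext
  intro v
  rw [eval_subst, eval_subst]
  simp

def substEquiv (G : C4 ≃ₗ[ℂ] C4) : R3 ≃ₗ[ℂ] R3 :=
  LinearEquiv.ofLinear (subst G.toLinearMap).toLinearMap (subst G.symm.toLinearMap).toLinearMap
    (LinearMap.ext fun q => subst_subst G q)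
    (LinearMap.ext fun q => by simpa using subst_subst G.symm q)

lemma substEquiv_apply (G : C4 ≃ₗ[ℂ] C4) (q : R3) :
    substEquiv G q = subst G.toLinearMap q := rfl

lemma substEquiv_symm_apply (G : C4 ≃ₗ[ℂ] C4) (q : R3) :
    (substEquiv G).symm q = subst G.symm.toLinearMap q := rfl

def SM (L : Fin 3 → Submodule ℂ C4) : Submodule ℂ R3 :=
  homogeneousSubmodule (Fin 4) ℂ 2 ⊓ ⨅ i, Submodule.restrictScalars ℂ (lineIdeal (L i))

lemma mem_SM_subst (G : C4 ≃ₗ[ℂ] C4) (L M : Fin 3 → Submodule ℂ C4)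
    (h : ∀ i, ∀ v ∈ M i, G v ∈ L i) {q : R3} (hq : q ∈ SM L) :
    subst G.toLinearMap q ∈ SM M := by
  obtain ⟨h2, hl⟩ := Submodule.mem_inf.mp hq
  rw [Submodule.mem_iInf] at hl
  refine Submodule.mem_inf.mpr ⟨?_, (Submodule.mem_iInf _).mpr fun i => ?_⟩
  · exact (mem_homogeneousSubmodule _ _).mpr
      (subst_homog _ ((mem_homogeneousSubmodule _ _).mp h2))
  · intro v hv
    show eval v (subst G.toLinearMap q) = 0
    rw [eval_subst]
    exact (hl i) _ (h i v hv)

lemma SM_map (G : C4 ≃ₗ[ℂ] C4) (L M : Fin 3 → Submodule ℂ C4)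
    (h : ∀ i, ∀ v ∈ M i, G v ∈ L i) (h' : ∀ i, ∀ v ∈ L i, G.symm v ∈ M i) :
    Submodule.map (substEquiv G : R3 →ₗ[ℂ] R3) (SM L) = SM M := by
  ext q
  rw [Submodule.mem_map_equiv]
  constructor
  · intro hs
    have h2 := mem_SM_subst G L M h hs
    rw [← substEquiv_apply, LinearEquiv.apply_symm_apply] at h2
    exact h2
  · intro hq
    rw [substEquiv_symm_apply]
    exact mem_SM_subst G.symm M L h' hq

lemma SM_finrank_eq (G : C4 ≃ₗ[ℂ] C4) (L M : Fin 3 → Submodule ℂ C4)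
    (h : ∀ i, ∀ v ∈ M i, G v ∈ L i) (h' : ∀ i, ∀ v ∈ L i, G.symm v ∈ M i) :
    Module.finrank ℂ (SM L) = Module.finrank ℂ (SM M) := by
  rw [← SM_map G L M h h']
  exact (LinearEquiv.finrank_map_eq (substEquiv G) (SM L)).symm

lemma range_fin2 (v : Fin 2 → C4) : Set.range v = {v 0, v 1} := by
  ext x
  simp [Fin.exists_fin_two, eq_comm]

/-- There is a unique quadric through three pairwise skew lines in `P^3`:
the space of degree-2 forms vanishing on three pairwise disjoint
2-dimensional subspaces of `ℂ^4` has dimension exactly 1. -/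
theorem stmt_1 (L : Fin 3 → Submodule ℂ C4)
    (hdim : ∀ i, Module.finrank ℂ ↥(L i) = 2)
    (hskew : ∀ i j, i ≠ j → L i ⊓ L j = ⊥) :
    Module.finrank ℂ
      ↥(homogeneousSubmodule (Fin 4) ℂ 2 ⊓
        ⨅ i, Submodule.restrictScalars ℂ (lineIdeal (L i))) = 1 := by
  have hC4 : Module.finrank ℂ C4 = 4 := by
    simp [Module.finrank_pi]
  -- L0 and L1 are complementary
  have hL01 : IsCompl (L 0) (L 1) := by
    constructor
    · rw [disjoint_iff]; exact hskew 0 1 (by decide)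
    · rw [codisjoint_iff]
      apply Submodule.eq_top_of_finrank_eq
      have h1 := Submodule.finrank_sup_add_finrank_inf_eq (L 0) (L 1)
      rw [hskew 0 1 (by decide), hdim 0, hdim 1, finrank_bot] at h1
      omega
  -- basis of L2
  set bas : Module.Basis (Fin 2) ℂ ↥(L 2) := Module.finBasisOfFinrankEq ℂ ↥(L 2) (hdim 2) with hbas
  set f : Fin 2 → C4 := fun k => (bas k : C4) with hf
  have hf_li : LinearIndependent ℂ f :=
    bas.linearIndependent.map' (L 2).subtype (Submodule.ker_subtype _)
  have hfspan : Submodule.span ℂ (Set.range f) = L 2 := by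
    have : Set.range f = (L 2).subtype '' Set.range bas := by
      rw [← Set.range_comp]; rfl
    rw [this, ← Submodule.map_span, bas.span_eq, Submodule.map_subtype_top]
  -- projections
  set pr1 : C4 →ₗ[ℂ] C4 :=
    (L 0).subtype ∘ₗ (Submodule.linearProjOfIsCompl (L 0) (L 1) hL01) with hpr1
  set pr2 : C4 →ₗ[ℂ] C4 :=
    (L 1).subtype ∘ₗ (Submodule.linearProjOfIsCompl (L 1) (L 0) hL01.symm) with hpr2
  have hker1 : LinearMap.ker pr1 = L 1 := by
    rw [hpr1, LinearMap.ker_comp, Submodule.ker_subtype, Submodule.comap_bot]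
    exact Submodule.ker_projectionOnto _
  have hker2 : LinearMap.ker pr2 = L 0 := by
    rw [hpr2, LinearMap.ker_comp, Submodule.ker_subtype, Submodule.comap_bot]
    exact Submodule.ker_projectionOnto _
  set a : Fin 2 → C4 := fun k => pr1 (f k) with ha
  set bb : Fin 2 → C4 := fun k => pr2 (f k) with hbb
  have hab : ∀ k, a k + bb k = f k := fun k =>
    Submodule.projection_add_projection_eq_self hL01 (f k)
  have ha_mem : ∀ k, a k ∈ L 0 := fun k => ((Submodule.linearProjOfIsCompl (L 0) (L 1) hL01) (f k)).2
  have hb_mem : ∀ k, bb k ∈ L 1 := fun k =>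
    ((Submodule.linearProjOfIsCompl (L 1) (L 0) hL01.symm) (f k)).2
  have ha_li : LinearIndependent ℂ a := by
    apply hf_li.map (f := pr1)
    rw [hfspan, hker1, disjoint_iff]
    exact hskew 2 1 (by decide)
  have hb_li : LinearIndependent ℂ bb := by
    apply hf_li.map (f := pr2)
    rw [hfspan, hker2, disjoint_iff]
    exact hskew 2 0 (by decide)
  have hspan_a : Submodule.span ℂ (Set.range a) = L 0 := by
    apply Submodule.eq_of_le_of_finrank_le
    · rw [Submodule.span_le]; rintro x ⟨k, rfl⟩; exact ha_mem k
    · rw [hdim 0, finrank_span_eq_card ha_li]; simp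
  have hspan_b : Submodule.span ℂ (Set.range bb) = L 1 := by
    apply Submodule.eq_of_le_of_finrank_le
    · rw [Submodule.span_le]; rintro x ⟨k, rfl⟩; exact hb_mem k
    · rw [hdim 1, finrank_span_eq_card hb_li]; simp
  -- the linear automorphism
  set w : Fin 4 → C4 := ![a 0, a 1, bb 0, bb 1] with hw
  set glin : C4 →ₗ[ℂ] C4 := (Pi.basisFun ℂ (Fin 4)).constr ℂ w with hglin
  have hrange : LinearMap.range glin = ⊤ := by
    rw [hglin, Module.Basis.constr_range]
    apply le_antisymm le_top
    rw [← codisjoint_iff.mp hL01.codisjoint]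
    apply sup_le
    · rw [← hspan_a, Submodule.span_le]
      rintro x ⟨k, rfl⟩
      apply Submodule.subset_span
      fin_cases k
      · exact ⟨0, rfl⟩
      · exact ⟨1, rfl⟩
    · rw [← hspan_b, Submodule.span_le]
      rintro x ⟨k, rfl⟩
      apply Submodule.subset_span
      fin_cases k
      · exact ⟨2, rfl⟩
      · exact ⟨3, rfl⟩
  have hsurj : Function.Surjective glin := LinearMap.range_eq_top.mp hrange
  have hbij : Function.Bijective glin :=
    ⟨(LinearMap.injective_iff_surjective).mpr hsurj, hsurj⟩
  set G : C4 ≃ₗ[ℂ] C4 := LinearEquiv.ofBijective glin hbij with hG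
  have hGs : ∀ j : Fin 4, G (Pi.single j 1) = w j := by
    intro j
    show glin (Pi.single j 1) = w j
    rw [← Pi.basisFun_apply, hglin, Module.Basis.constr_basis]
  -- G maps the concrete lines onto the L i
  have hmap : ∀ i, Submodule.map (G : C4 →ₗ[ℂ] C4) (Mline i) = L i := by
    intro i
    fin_cases i
    · show Submodule.map (G : C4 →ₗ[ℂ] C4) (Submodule.span ℂ {sv 0, sv 1}) = L 0
      rw [Submodule.map_span, Set.image_insert_eq, Set.image_singleton]
      have e0 : (G : C4 →ₗ[ℂ] C4) (sv 0) = a 0 := hGs 0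
      have e1 : (G : C4 →ₗ[ℂ] C4) (sv 1) = a 1 := hGs 1
      rw [e0, e1, ← range_fin2, hspan_a]
    · show Submodule.map (G : C4 →ₗ[ℂ] C4) (Submodule.span ℂ {sv 2, sv 3}) = L 1
      rw [Submodule.map_span, Set.image_insert_eq, Set.image_singleton]
      have e0 : (G : C4 →ₗ[ℂ] C4) (sv 2) = bb 0 := hGs 2
      have e1 : (G : C4 →ₗ[ℂ] C4) (sv 3) = bb 1 := hGs 3
      rw [e0, e1, ← range_fin2, hspan_b]
    · show Submodule.map (G : C4 →ₗ[ℂ] C4) (Submodule.span ℂ {sv 0 + sv 2, sv 1 + sv 3}) = L 2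
      rw [Submodule.map_span, Set.image_insert_eq, Set.image_singleton]
      have e0 : (G : C4 →ₗ[ℂ] C4) (sv 0 + sv 2) = f 0 := by
        rw [map_add]
        have e0a : (G : C4 →ₗ[ℂ] C4) (sv 0) = a 0 := hGs 0
        have e0b : (G : C4 →ₗ[ℂ] C4) (sv 2) = bb 0 := hGs 2
        rw [e0a, e0b, hab]
      have e1 : (G : C4 →ₗ[ℂ] C4) (sv 1 + sv 3) = f 1 := by
        rw [map_add]
        have e1a : (G : C4 →ₗ[ℂ] C4) (sv 1) = a 1 := hGs 1
        have e1b : (G : C4 →ₗ[ℂ] C4) (sv 3) = bb 1 := hGs 3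
        rw [e1a, e1b, hab]
      rw [e0, e1, ← range_fin2, hfspan]
  have hfwd : ∀ i, ∀ v ∈ Mline i, G v ∈ L i := by
    intro i v hv
    rw [← hmap i]
    exact Submodule.mem_map_of_mem hv
  have hbwd : ∀ i, ∀ v ∈ L i, G.symm v ∈ Mline i := by
    intro i v hv
    rw [← hmap i] at hv
    obtain ⟨u, hu, rfl⟩ := hv
    simpa using hu
  have key : Module.finrank ℂ (SM L) = 1 := by
    rw [SM_finrank_eq G L Mline hfwd hbwd]
    exact concrete_finrank
  exact key
end
end

section
/- Let A = ℂ[[t]] be the ring of formal power series, let S = A[x,y,z] be the polynomial ring in three variables over A, and let m, n ≥ 1 be integers. Let ε : S → ℂ[x,y,z] be the ring homomorphism applying the constant-coefficient map ℂ[[t]] → ℂ (evaluation t = 0) to coefficients. If F ∈ S satisfies F ∈ (x,y)^m and F ∈ (y − t, z)^n (where t ∈ S denotes the constant polynomial given by the power series t), then F_0 := ε(F) satisfies F_0 ∈ (x,y)^m, F_0 ∈ (y,z)^n, and F_0 ∈ (x,y,z)^{m+n} in ℂ[x,y,z]. Geometrically: a limit of surfaces with multiplicity m along a fixed line l and multiplicity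 n along a moving line r_t acquires multiplicity at least m+n at the intersection point of l and the limit line r_0. -/
open MvPolynomial

noncomputable section

/-- `S = ℂ[[t]][x,y,z]`, the polynomial ring in three variables (indexed by
`Fin 3`, with `x = X 0`, `y = X 1`, `z = X 2`) over the formal power series ring. -/
abbrev S : Type := MvPolynomial (Fin 3) (PowerSeries ℂ)

/-- `ε : ℂ[[t]][x,y,z] → ℂ[x,y,z]`, applying evaluation at `t = 0`
(the constant coefficient map) to the coefficients. -/
def eps : S →+* MvPolynomial (Fin 3) ℂ :=
  MvPolynomial.map (PowerSeries.constantCoeff (R := ℂ))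

/-- The substitution `x ↦ xy, y ↦ y, z ↦ z(y - t)`. -/
def psi : S →ₐ[PowerSeries ℂ] S :=
  aeval ![X 0 * X 1, X 1, X 2 * (X 1 - C PowerSeries.X)]

/-- The substitution `x ↦ xy, y ↦ y, z ↦ zy` over `ℂ`. -/
def psi0 : MvPolynomial (Fin 3) ℂ →ₐ[ℂ] MvPolynomial (Fin 3) ℂ :=
  aeval ![X 0 * X 1, X 1, X 2 * X 1]

lemma mono_decomp (μ : Fin 3 →₀ ℕ) :
    μ = Finsupp.single 0 (μ 0) + Finsupp.single 1 (μ 1) + Finsupp.single 2 (μ 2) := by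
  ext i
  fin_cases i <;> simp [Finsupp.single_apply]

lemma monomial_eq_prod' {R : Type*} [CommSemiring R] (a b c' : ℕ) (c : R) :
    monomial (Finsupp.single (0 : Fin 3) a + Finsupp.single 1 b + Finsupp.single 2 c') c
      = C c * X 0 ^ a * X 1 ^ b * X 2 ^ c' := by
  simp only [MvPolynomial.C_apply, MvPolynomial.X_pow_eq_monomial, MvPolynomial.monomial_mul,
    mul_one, one_mul, zero_add]

lemma monomial_eq_prod {R : Type*} [CommSemiring R] (μ : Fin 3 →₀ ℕ) (c : R) :
    monomial μ c = C c * X 0 ^ (μ 0) * X 1 ^ (μ 1) * X 2 ^ (μ 2) := by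
  conv_lhs => rw [mono_decomp μ]
  exact monomial_eq_prod' (μ 0) (μ 1) (μ 2) c

/-- the exponent map `(a,b,c) ↦ (a, a+b+c, c)` -/
def nu (μ : Fin 3 →₀ ℕ) : Fin 3 →₀ ℕ := μ + Finsupp.single 1 (μ 0 + μ 2)

lemma nu_apply_one (μ : Fin 3 →₀ ℕ) : nu μ 1 = μ 1 + (μ 0 + μ 2) := by
  simp [nu]

lemma nu_injective : Function.Injective nu := by
  intro μ μ' h
  have h0 : μ 0 = μ' 0 := by
    have := DFunLike.congr_fun h 0
    simpa [nu, Finsupp.single_apply] using this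
  have h2 : μ 2 = μ' 2 := by
    have := DFunLike.congr_fun h 2
    simpa [nu, Finsupp.single_apply] using this
  have h1 : μ 1 = μ' 1 := by
    have := DFunLike.congr_fun h 1
    simp [nu, Finsupp.single_apply, h0, h2] at this
    omega
  ext i
  fin_cases i <;> assumption

lemma psi0_monomial (μ : Fin 3 →₀ ℕ) (c : ℂ) :
    psi0 (monomial μ c) = monomial (nu μ) c := by
  rw [monomial_eq_prod, monomial_eq_prod]
  have e0 : nu μ 0 = μ 0 := by simp [nu, Finsupp.single_apply]
  have e2 : nu μ 2 = μ 2 := by simp [nu, Finsupp.single_apply]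
  rw [e0, e2, nu_apply_one]
  simp only [map_mul, map_pow, psi0, aeval_X, aeval_C, MvPolynomial.algebraMap_eq,
    Matrix.cons_val_zero, Matrix.cons_val_one, Matrix.head_cons, Matrix.cons_val_two,
    Matrix.tail_cons]
  ring

lemma coeff_psi0 (P : MvPolynomial (Fin 3) ℂ) (μ : Fin 3 →₀ ℕ) :
    coeff (nu μ) (psi0 P) = coeff μ P := by
  conv_lhs => rw [P.as_sum, map_sum]
  simp_rw [psi0_monomial]
  rw [MvPolynomial.coeff_sum]
  simp_rw [MvPolynomial.coeff_monomial]
  rw [Finset.sum_eq_single μ]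
  · simp [MvPolynomial.coeff]
  · intro b _ hb
    rw [if_neg fun h => hb (nu_injective h)]
  · intro h
    simp [MvPolynomial.notMem_support_iff.mp h]

/-- A limit of surfaces with multiplicity `m` along the fixed line `l = {x = y = 0}`
and multiplicity `n` along the moving line `r_t = {y = t, z = 0}` satisfies the
same multiplicity conditions along `l` and `r_0`, and acquires multiplicity at
least `m + n` at the intersection point `p` (the origin): if `F ∈ (x,y)^m` and
`F ∈ (y - t, z)^n` in `S`, then `F₀ = ε(F)` lies in `(x,y)^m`, `(y,z)^n` and
`(x,y,z)^{m+n}` in `ℂ[x,y,z]`. -/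
theorem stmt_12 (m n : ℕ) (hm : 1 ≤ m) (hn : 1 ≤ n) (F : S)
    (hFl : F ∈ (Ideal.span {(X 0 : S), X 1}) ^ m)
    (hFr : F ∈ (Ideal.span {(X 1 : S) - C PowerSeries.X, X 2}) ^ n) :
    eps F ∈ (Ideal.span {(X 0 : MvPolynomial (Fin 3) ℂ), X 1}) ^ m ∧
    eps F ∈ (Ideal.span {(X 1 : MvPolynomial (Fin 3) ℂ), X 2}) ^ n ∧
    eps F ∈ (Ideal.span {(X 0 : MvPolynomial (Fin 3) ℂ), X 1, X 2}) ^ (m + n) := by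
  refine ⟨?_, ?_, ?_⟩
  · have h1 : eps F ∈ Ideal.map eps ((Ideal.span {(X 0 : S), X 1}) ^ m) :=
      Ideal.mem_map_of_mem _ hFl
    rwa [Ideal.map_pow, Ideal.map_span, Set.image_insert_eq, Set.image_singleton,
      show eps (X 0) = X 0 from MvPolynomial.map_X _ _,
      show eps (X 1) = X 1 from MvPolynomial.map_X _ _] at h1
  · have h1 : eps F ∈ Ideal.map eps ((Ideal.span {(X 1 : S) - C PowerSeries.X, X 2}) ^ n) :=
      Ideal.mem_map_of_mem _ hFr
    rw [Ideal.map_pow, Ideal.map_span, Set.image_insert_eq, Set.image_singleton] at h1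
    have e1 : eps ((X 1 : S) - C PowerSeries.X) = X 1 := by
      simp [eps, MvPolynomial.map_X, MvPolynomial.map_C]
    have e2 : eps (X 2 : S) = X 2 := MvPolynomial.map_X _ _
    rwa [e1, e2] at h1
  · -- the interesting part
    set q : S := X 1 - C PowerSeries.X with hqdef
    have psiX0 : psi (X 0) = X 0 * X 1 := by simp [psi]
    have psiX1 : psi (X 1) = X 1 := by simp [psi]
    have psiX2 : psi (X 2) = X 2 * q := by simp [psi, hqdef]
    have hG1 : (X 1 : S) ^ m ∣ psi F := by
      have h1 : psi F ∈ Ideal.map psi.toRingHom ((Ideal.span {(X 0 : S), X 1}) ^ m) :=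
        Ideal.mem_map_of_mem _ hFl
      rw [Ideal.map_pow, Ideal.map_span, Set.image_insert_eq, Set.image_singleton] at h1
      have hle : Ideal.span {psi.toRingHom (X 0), psi.toRingHom (X 1)}
          ≤ Ideal.span {(X 1 : S)} := by
        rw [Ideal.span_le]
        intro s hs
        rcases hs with rfl | rfl
        · show psi (X 0) ∈ _
          rw [psiX0]
          exact Ideal.mem_span_singleton.2 (dvd_mul_left _ _)
        · show psi (X 1) ∈ _
          rw [psiX1]
          exact Ideal.mem_span_singleton.2 dvd_rfl
      have h2 : psi F ∈ (Ideal.span {(X 1 : S)}) ^ m := Ideal.pow_right_mono hle m h1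
      rwa [Ideal.span_singleton_pow, Ideal.mem_span_singleton] at h2
    have hG2 : q ^ n ∣ psi F := by
      have h1 : psi F ∈ Ideal.map psi.toRingHom
          ((Ideal.span {(X 1 : S) - C PowerSeries.X, X 2}) ^ n) :=
        Ideal.mem_map_of_mem _ hFr
      rw [Ideal.map_pow, Ideal.map_span, Set.image_insert_eq, Set.image_singleton] at h1
      have hle : Ideal.span {psi.toRingHom ((X 1 : S) - C PowerSeries.X), psi.toRingHom (X 2)}
          ≤ Ideal.span {q} := by
        rw [Ideal.span_le]
        intro s hs
        rcases hs with rfl | rfl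
        · show psi ((X 1 : S) - C PowerSeries.X) ∈ _
          have : psi ((X 1 : S) - C PowerSeries.X) = q := by
            rw [map_sub, psiX1, hqdef]
            congr 1
            simp [psi]
          rw [this]
          exact Ideal.mem_span_singleton.2 dvd_rfl
        · show psi (X 2) ∈ _
          rw [psiX2]
          exact Ideal.mem_span_singleton.2 (dvd_mul_left _ _)
      have h2 : psi F ∈ (Ideal.span {q}) ^ n := Ideal.pow_right_mono hle n h1
      rwa [Ideal.span_singleton_pow, Ideal.mem_span_singleton] at h2
    have hq : Prime q := by
      let e := (renameEquiv (PowerSeries ℂ) (Equiv.swap (0 : Fin 3) 1)).trans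
        (finSuccEquiv (PowerSeries ℂ) 2)
      refine (MulEquiv.prime_iff e.toMulEquiv).mp ?_
      have : e.toMulEquiv q = Polynomial.X - Polynomial.C (C PowerSeries.X) := by
        show e q = _
        rw [hqdef, AlgEquiv.trans_apply, map_sub, map_sub, renameEquiv_apply, renameEquiv_apply,
          rename_X, rename_C, Equiv.swap_apply_right, finSuccEquiv_X_zero]
        congr 1
        simp [finSuccEquiv_apply]
      rw [this]
      exact Polynomial.prime_X_sub_C _
    have hnd : ¬ q ∣ (X 1 : S) ^ m := by
      intro hdvd
      have h := map_dvd (aeval (R := PowerSeries ℂ)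
        ![(0 : PowerSeries ℂ), PowerSeries.X, 0]) hdvd
      simp only [hqdef, map_sub, map_pow, aeval_X, aeval_C, Algebra.algebraMap_self,
        RingHom.id_apply, Matrix.cons_val_one, Matrix.head_cons, Matrix.cons_val_zero, sub_self,
        zero_dvd_iff] at h
      exact pow_ne_zero m PowerSeries.X_ne_zero h
    obtain ⟨H1, hH1⟩ := hG1
    have hqn : q ^ n ∣ H1 := hq.pow_dvd_of_dvd_mul_left n hnd (hH1 ▸ hG2)
    obtain ⟨H2, hH2⟩ := hqn
    have hcomp : eps.comp psi.toRingHom = psi0.toRingHom.comp eps := by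
      apply MvPolynomial.ringHom_ext
      · intro r
        simp [eps, psi, psi0, MvPolynomial.algebraMap_eq]
      · intro i
        fin_cases i <;>
          simp [eps, psi, psi0, PowerSeries.constantCoeff_X]
    have key : psi0 (eps F) = X 1 ^ (m + n) * eps H2 := by
      have h1 : eps (psi F) = psi0 (eps F) := RingHom.congr_fun hcomp F
      have eq : eps q = X 1 := by
        simp [hqdef, eps, PowerSeries.constantCoeff_X]
      rw [← h1, hH1, hH2, map_mul, map_mul, map_pow, map_pow,
        show eps (X 1) = X 1 from MvPolynomial.map_X _ _, eq, ← mul_assoc, ← pow_add]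
    have hvanish : ∀ μ : Fin 3 →₀ ℕ, μ 0 + μ 1 + μ 2 < m + n → coeff μ (eps F) = 0 := by
      intro μ hμ
      have h := coeff_psi0 (eps F) μ
      rw [key] at h
      have hnle : ¬ (Finsupp.single 1 (m + n) ≤ nu μ) := by
        rw [Finsupp.single_le_iff, nu_apply_one]
        omega
      rw [← h, X_pow_eq_monomial, MvPolynomial.coeff_monomial_mul', if_neg hnle]
    nth_rewrite 1 [(eps F).as_sum]
    apply Ideal.sum_mem
    intro μ hμ
    have hdeg : m + n ≤ μ 0 + μ 1 + μ 2 := by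
      by_contra hlt
      exact (MvPolynomial.mem_support_iff.mp hμ) (hvanish μ (by omega))
    rw [monomial_eq_prod]
    have h0 : (X 0 : MvPolynomial (Fin 3) ℂ) ∈ Ideal.span {X 0, X 1, X 2} :=
      Ideal.subset_span (by simp)
    have h1 : (X 1 : MvPolynomial (Fin 3) ℂ) ∈ Ideal.span {X 0, X 1, X 2} :=
      Ideal.subset_span (by simp)
    have h2 : (X 2 : MvPolynomial (Fin 3) ℂ) ∈ Ideal.span {X 0, X 1, X 2} :=
      Ideal.subset_span (by simp)
    have hkey : (X 0 : MvPolynomial (Fin 3) ℂ) ^ μ 0 * X 1 ^ μ 1 * X 2 ^ μ 2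
        ∈ (Ideal.span {X 0, X 1, X 2} : Ideal (MvPolynomial (Fin 3) ℂ)) ^ (μ 0 + μ 1 + μ 2) := by
      rw [pow_add, pow_add]
      exact Ideal.mul_mem_mul
        (Ideal.mul_mem_mul (Ideal.pow_mem_pow h0 _) (Ideal.pow_mem_pow h1 _))
        (Ideal.pow_mem_pow h2 _)
    have hmem := Ideal.pow_le_pow_right hdeg hkey
    rw [mul_assoc, mul_assoc, ← mul_assoc (X 0 ^ μ 0)]
    exact Ideal.mul_mem_left _ _ hmem
end
end
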